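/- arXiv:2202.04690 — 3 statements merged into one kernel-verified Lean document; each statement's English description precedes it below -/
import Mathlib

section
/- Let F be a class of functions from X to [−1,1]. If the sequential fat-shattering dimension of F at scale δ equals d, then 2^d ≤ N(F, δ/3), where N(F, δ/3) is the minimal size of a δ/3-covering of F in the supremum norm. In particular, fat_δ(F) ≤ log₂ N(F, δ/3). -/
/-- If a class `F` of `[−1,1]`-valued functions sequentially fat-shatters a binary tree of
depth `d` at scale `δ`, then every `δ/3`-covering of `F` in the sup norm has size at least `2^d`.
In particular `fat_δ(F) ≤ log₂ N(F, δ/3)`. -/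
theorem stmt_5 {X : Type*} (F : Set (X → ℝ))
    (hF : ∀ f ∈ F, ∀ x, f x ∈ Set.Icc (-1 : ℝ) 1)
    (δ : ℝ) (hδ : 0 < δ) (d : ℕ)
    (xtree : ∀ t : Fin d, (Fin t → Bool) → X)
    (stree : ∀ t : Fin d, (Fin t → Bool) → ℝ)
    (hshat : ∀ ε : Fin d → Bool, ∃ f ∈ F, ∀ t : Fin d,
      (if ε t then (1 : ℝ) else -1) *
          (f (xtree t fun i => ε ⟨i, i.isLt.trans t.isLt⟩) -
            stree t fun i => ε ⟨i, i.isLt.trans t.isLt⟩) ≥ δ / 2)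
    (S : Finset (X → ℝ))
    (hcover : ∀ f ∈ F, ∃ s ∈ S, ∀ x, |s x - f x| ≤ δ / 3) :
    2 ^ d ≤ S.card := by
  choose f hfF hf using hshat
  choose s hsS hs using (fun ε => hcover (f ε) (hfF ε))
  have hinj : Function.Injective s := by
    intro ε ε' hse
    by_contra hne
    have hex : ∃ n, ∃ hn : n < d, ε ⟨n, hn⟩ ≠ ε' ⟨n, hn⟩ := by
      by_contra hall
      push_neg at hall
      exact hne (funext fun t => hall t.1 t.2)
    classical
    let n := Nat.find hex
    obtain ⟨hn, hdiff⟩ : ∃ hn : n < d, ε ⟨n, hn⟩ ≠ ε' ⟨n, hn⟩ := Nat.find_spec hex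
    set t : Fin d := ⟨n, hn⟩ with ht
    have hpre : (fun i : Fin t => ε ⟨i, i.isLt.trans t.isLt⟩)
        = fun i : Fin t => ε' ⟨i, i.isLt.trans t.isLt⟩ := by
      funext i
      by_contra hc
      exact Nat.find_min hex i.isLt ⟨i.isLt.trans t.isLt, hc⟩
    set x := xtree t (fun i => ε ⟨i, i.isLt.trans t.isLt⟩) with hx
    set st := stree t (fun i => ε ⟨i, i.isLt.trans t.isLt⟩) with hst
    have h1 := hf ε t
    have h2 := hf ε' t
    rw [show (xtree t fun i => ε' ⟨i, i.isLt.trans t.isLt⟩) = x by rw [hx, hpre],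
        show (stree t fun i => ε' ⟨i, i.isLt.trans t.isLt⟩) = st by rw [hst, hpre]] at h2
    rw [← hx, ← hst] at h1
    have key : ∀ (a b : Fin d → Bool), a t = true → b t = false →
        (if a t then (1:ℝ) else -1) * (f a x - st) ≥ δ/2 →
        (if b t then (1:ℝ) else -1) * (f b x - st) ≥ δ/2 →
        s a = s b → False := by
      intro a b hat hbt ha hb hsab
      rw [hat] at ha; rw [hbt] at hb
      simp only [if_true, Bool.false_eq_true, if_false, one_mul, neg_mul, neg_sub] at ha hb
      have hca := hs a x
      have hcb := hs b x
      have : s a x ≥ st + δ/2 - δ/3 := by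
        have := abs_le.mp hca
        linarith
      have : s b x ≤ st - δ/2 + δ/3 := by
        have := abs_le.mp hcb
        linarith
      have := congrFun hsab x
      linarith
    cases hεt : ε t with
    | true =>
      have hε't : ε' t = false := by
        cases h : ε' t
        · rfl
        · exact absurd (hεt.trans h.symm) hdiff
      exact key ε ε' hεt hε't h1 h2 hse
    | false =>
      have hε't : ε' t = true := by
        cases h : ε' t
        · exact absurd (hεt.trans h.symm) hdiff
        · rfl
      exact key ε' ε hε't hεt h2 h1 hse.symm
  have : (Finset.univ : Finset (Fin d → Bool)).card ≤ S.card :=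
    Finset.card_le_card_of_injOn s (fun ε _ => hsS ε) hinj.injOn
  rw [Finset.card_univ, Fintype.card_fun, Fintype.card_bool, Fintype.card_fin] at this
  exact this
end

section
/- Let F be a class of functions X → [−1,1] that is shattered at scale α by points x₁,…,x_m with witness s₁,…,s_m (i.e., for every ε ∈ {±1}^m there is f_ε ∈ F with εⱼ(f_ε(x_j) − s_j) ≥ α/2 for all j). Let ε_{j,k} for j ∈ [m], k ∈ [n] be i.i.d. Rademacher. Then E[sup_{f∈F} ∑_{j=1}^m ∑_{k=1}^n ε_{j,k} f(x_j)] ≥ (α/4)·m·E[|∑_{k=1}^n ε_k|] ≥ (α/8)·m·√n. -/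
open MeasureTheory ProbabilityTheory
open scoped ENNReal
set_option linter.unusedSectionVars false
set_option linter.unusedVariables false
set_option maxHeartbeats 1000000

section aux
variable {Ω : Type*} [MeasurableSpace Ω] {P : Measure Ω} [IsProbabilityMeasure P]
variable {ι : Type*} {ε : ι → Ω → ℝ}

variable {Ω : Type*} [MeasurableSpace Ω] {P : Measure Ω} [IsProbabilityMeasure P]
variable {ι : Type*} {ε : ι → Ω → ℝ}

omit [IsProbabilityMeasure P] in
lemma rad_sq (hval : ∀ p ω, ε p ω = 1 ∨ ε p ω = -1) (p : ι) (ω : Ω) :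
    ε p ω * ε p ω = 1 := by rcases hval p ω with h | h <;> rw [h] <;> norm_num

omit [IsProbabilityMeasure P] in
lemma rad_abs (hval : ∀ p ω, ε p ω = 1 ∨ ε p ω = -1) (p : ι) (ω : Ω) :
    |ε p ω| = 1 := by rcases hval p ω with h | h <;> rw [h] <;> norm_num

lemma rad_int (hmeas : ∀ p, Measurable (ε p)) (hval : ∀ p ω, ε p ω = 1 ∨ ε p ω = -1)
    (p : ι) : Integrable (ε p) P := by
  refine ⟨(hmeas p).aestronglyMeasurable, HasFiniteIntegral.of_bounded (C := 1) ?_⟩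
  refine ae_of_all _ fun ω => ?_
  rcases hval p ω with h | h <;> simp [h]

lemma rad_mean (hmeas : ∀ p, Measurable (ε p)) (hval : ∀ p ω, ε p ω = 1 ∨ ε p ω = -1)
    (hfair : ∀ p, P {ω | ε p ω = 1} = 1 / 2) (p : ι) : ∫ ω, ε p ω ∂P = 0 := by
  classical
  have hA : MeasurableSet {ω | ε p ω = 1} := (hmeas p) (measurableSet_singleton 1)
  have hrep : ∀ ω, ε p ω = Set.indicator {ω | ε p ω = 1} (fun _ => (2:ℝ)) ω - 1 := by
    intro ω
    rcases hval p ω with h | h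
    · rw [Set.indicator_of_mem (by simpa using h)]; rw [h]; norm_num
    · rw [Set.indicator_of_notMem (by simp [h]; norm_num)]; rw [h]; norm_num
  rw [show (fun ω => ε p ω) = fun ω => Set.indicator {ω | ε p ω = 1} (fun _ => (2:ℝ)) ω - 1
    from funext hrep]
  rw [integral_sub ((integrable_const (2:ℝ)).indicator hA) (integrable_const 1)]
  rw [integral_indicator_const _ hA, measureReal_def, hfair p, integral_const]
  simp [ENNReal.toReal_div]

lemma rad_prod_int (hmeas : ∀ p, Measurable (ε p)) (hval : ∀ p ω, ε p ω = 1 ∨ ε p ω = -1)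
    (T : Finset ι) : Integrable (fun ω => ∏ q ∈ T, ε q ω) P := by
  refine ⟨(Finset.measurable_prod T fun q _ => hmeas q).aestronglyMeasurable,
    HasFiniteIntegral.of_bounded (C := 1) (ae_of_all _ fun ω => ?_)⟩
  rw [Real.norm_eq_abs, Finset.abs_prod]
  calc ∏ q ∈ T, |ε q ω| = ∏ q ∈ T, 1 := Finset.prod_congr rfl fun q _ => rad_abs hval q ω
  _ = 1 := Finset.prod_const_one
  _ ≤ 1 := le_refl _

lemma rad_prod0 (hmeas : ∀ p, Measurable (ε p))
    (hind : iIndepFun ε P)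
    (hval : ∀ p ω, ε p ω = 1 ∨ ε p ω = -1)
    (hfair : ∀ p, P {ω | ε p ω = 1} = 1 / 2)
    (T : Finset ι) (p : ι) (hp : p ∉ T) :
    ∫ ω, (∏ q ∈ T, ε q ω) * ε p ω ∂P = 0 := by
  have hI : IndepFun (∏ q ∈ T, ε q) (ε p) P :=
    hind.indepFun_finsetProd_of_notMem hmeas hp
  have h1 : Integrable (∏ q ∈ T, ε q) P := by
    rw [show (∏ q ∈ T, ε q) = fun ω => ∏ q ∈ T, ε q ω from funext fun ω => by
      simp [Finset.prod_apply]]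
    exact rad_prod_int hmeas hval T
  have h2 := hI.integral_mul_eq_mul_integral h1.aestronglyMeasurable (rad_int hmeas hval p).aestronglyMeasurable
  rw [rad_mean hmeas hval hfair p, mul_zero] at h2
  rw [show (fun ω => (∏ q ∈ T, ε q ω) * ε p ω) = (∏ q ∈ T, ε q) * ε p from funext fun ω => by
    simp [Finset.prod_apply]]
  exact h2

lemma rad_pair (hmeas : ∀ p, Measurable (ε p))
    (hind : iIndepFun ε P)
    (hval : ∀ p ω, ε p ω = 1 ∨ ε p ω = -1)
    (hfair : ∀ p, P {ω | ε p ω = 1} = 1 / 2)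
    {p q : ι} (hpq : p ≠ q) :
    ∫ ω, ε p ω * ε q ω ∂P = 0 := by
  have := rad_prod0 hmeas hind hval hfair {p} q (by simpa using hpq.symm)
  simpa using this



lemma rad_quad_int (hmeas : ∀ p, Measurable (ε p)) (hval : ∀ p ω, ε p ω = 1 ∨ ε p ω = -1)
    (a b c d : ι) : Integrable (fun ω => ε a ω * ε b ω * ε c ω * ε d ω) P := by
  refine ⟨((((hmeas a).mul (hmeas b)).mul (hmeas c)).mul (hmeas d)).aestronglyMeasurable,
    HasFiniteIntegral.of_bounded (C := 1) (ae_of_all _ fun ω => ?_)⟩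
  have h : ∀ p, |ε p ω| = 1 := by
    intro p; rcases hval p ω with h | h <;> rw [h] <;> norm_num
  rw [Real.norm_eq_abs, abs_mul, abs_mul, abs_mul, h, h, h, h]; norm_num
lemma rad_quad [DecidableEq ι] (hval : ∀ p ω, ε p ω = 1 ∨ ε p ω = -1)
    (hQI : ∀ a b c d : ι, Integrable (fun ω => ε a ω * ε b ω * ε c ω * ε d ω) P)
    (hpair : ∀ {p q : ι}, p ≠ q → ∫ ω, ε p ω * ε q ω ∂P = 0)
    (hprod0 : ∀ (T : Finset ι) (p : ι), p ∉ T → ∫ ω, (∏ q ∈ T, ε q ω) * ε p ω ∂P = 0)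
    (a b c d : ι) :
    ∫ ω, ε a ω * ε b ω * ε c ω * ε d ω ∂P ≤
      (if a = b ∧ c = d then (1:ℝ) else 0) + (if a = c ∧ b = d then 1 else 0) +
        (if a = d ∧ b = c then 1 else 0) := by
  by_cases h1 : (a = b ∧ c = d) ∨ (a = c ∧ b = d) ∨ (a = d ∧ b = c)
  · have hle1 : ∫ ω, ε a ω * ε b ω * ε c ω * ε d ω ∂P ≤ 1 := by
      have := integral_mono (hQI a b c d) (integrable_const (1:ℝ)) (fun ω => by
        have h : ∀ p, |ε p ω| = 1 := by
          intro p; rcases hval p ω with h | h <;> rw [h] <;> norm_num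
        have : |ε a ω * ε b ω * ε c ω * ε d ω| = 1 := by
          rw [abs_mul, abs_mul, abs_mul, h, h, h, h]; norm_num
        calc ε a ω * ε b ω * ε c ω * ε d ω ≤ |ε a ω * ε b ω * ε c ω * ε d ω| := le_abs_self _
          _ = 1 := this)
      simpa using this
    have hge : (1:ℝ) ≤ (if a = b ∧ c = d then (1:ℝ) else 0) + (if a = c ∧ b = d then 1 else 0) +
        (if a = d ∧ b = c then 1 else 0) := by
      have n1 : (0:ℝ) ≤ (if a = b ∧ c = d then (1:ℝ) else 0) := by split_ifs <;> norm_num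
      have n2 : (0:ℝ) ≤ (if a = c ∧ b = d then (1:ℝ) else 0) := by split_ifs <;> norm_num
      have n3 : (0:ℝ) ≤ (if a = d ∧ b = c then (1:ℝ) else 0) := by split_ifs <;> norm_num
      rcases h1 with h | h | h <;> rw [if_pos h] <;> linarith
    linarith
  · push_neg at h1
    rw [if_neg, if_neg, if_neg]
    rotate_left
    · intro h; exact (h1.2.2 h.1) h.2
    · intro h; exact (h1.2.1 h.1) h.2
    · intro h; exact (h1.1 h.1) h.2
    rw [add_zero, add_zero]
    refine le_of_eq ?_
    by_cases hab : a = b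
    · subst hab
      have hcd : c ≠ d := h1.1 rfl
      rw [show (fun ω => ε a ω * ε a ω * ε c ω * ε d ω) = fun ω => ε c ω * ε d ω from
        funext fun ω => by linear_combination (ε c ω * ε d ω) * rad_sq hval a ω]
      exact hpair hcd
    · by_cases hac : a = c
      · subst hac
        have hbd : b ≠ d := h1.2.1 rfl
        rw [show (fun ω => ε a ω * ε b ω * ε a ω * ε d ω) = fun ω => ε b ω * ε d ω from
          funext fun ω => by linear_combination (ε b ω * ε d ω) * rad_sq hval a ω]
        exact hpair hbd
      · by_cases had : a = d
        · subst had
          have hbc : b ≠ c := h1.2.2 rfl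
          rw [show (fun ω => ε a ω * ε b ω * ε c ω * ε a ω) = fun ω => ε b ω * ε c ω from
            funext fun ω => by linear_combination (ε b ω * ε c ω) * rad_sq hval a ω]
          exact hpair hbc
        · by_cases hbc : b = c
          · subst hbc
            rw [show (fun ω => ε a ω * ε b ω * ε b ω * ε d ω) = fun ω => ε a ω * ε d ω from
              funext fun ω => by linear_combination (ε a ω * ε d ω) * rad_sq hval b ω]
            exact hpair had
          · by_cases hbd : b = d
            · subst hbd
              rw [show (fun ω => ε a ω * ε b ω * ε c ω * ε b ω) = fun ω => ε a ω * ε c ω from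
                funext fun ω => by linear_combination (ε a ω * ε c ω) * rad_sq hval b ω]
              exact hpair hac
            · by_cases hcd : c = d
              · subst hcd
                rw [show (fun ω => ε a ω * ε b ω * ε c ω * ε c ω) = fun ω => ε a ω * ε b ω from
                  funext fun ω => by linear_combination (ε a ω * ε b ω) * rad_sq hval c ω]
                exact hpair hab
              · have hT : a ∉ ({b, c, d} : Finset ι) := by
                  simp only [Finset.mem_insert, Finset.mem_singleton]
                  push_neg; exact ⟨hab, hac, had⟩
                have := hprod0 {b, c, d} a hT
                rw [show (fun ω => (∏ q ∈ ({b, c, d} : Finset ι), ε q ω) * ε a ω) =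
                    fun ω => ε a ω * ε b ω * ε c ω * ε d ω from funext fun ω => by
                  rw [Finset.prod_insert (by simp [hbc, hbd]),
                    Finset.prod_insert (by simp [hcd]), Finset.prod_singleton]; ring] at this
                exact this
lemma rad_S2 (hmeas : ∀ p, Measurable (ε p)) (hval : ∀ p ω, ε p ω = 1 ∨ ε p ω = -1)
    (hpair : ∀ {p q : ι}, p ≠ q → ∫ ω, ε p ω * ε q ω ∂P = 0)
    (hQI : ∀ a b : ι, Integrable (fun ω => ε a ω * ε b ω) P)
    {n : ℕ} (σ : Fin n → ι) (hσ : Function.Injective σ) :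
    ∫ ω, (∑ k, ε (σ k) ω)^2 ∂P = n := by
  classical
  rw [show (fun ω => (∑ k, ε (σ k) ω)^2) = fun ω => ∑ k, ∑ l, ε (σ k) ω * ε (σ l) ω from
    funext fun ω => by rw [sq, Finset.sum_mul_sum]]
  rw [integral_finset_sum _ (fun k _ => integrable_finset_sum _ (fun l _ => hQI _ _))]
  have : ∀ k : Fin n, ∫ ω, ∑ l, ε (σ k) ω * ε (σ l) ω ∂P = ∑ l, ∫ ω, ε (σ k) ω * ε (σ l) ω ∂P :=
    fun k => integral_finset_sum _ (fun l _ => hQI _ _)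
  rw [Finset.sum_congr rfl fun k _ => this k]
  have hterm : ∀ k l : Fin n, ∫ ω, ε (σ k) ω * ε (σ l) ω ∂P = if k = l then (1:ℝ) else 0 := by
    intro k l
    by_cases hkl : k = l
    · subst hkl
      rw [if_pos rfl, show (fun ω => ε (σ k) ω * ε (σ k) ω) = fun _ => (1:ℝ) from
        funext fun ω => rad_sq hval (σ k) ω]
      simp
    · rw [if_neg hkl]; exact hpair (fun h => hkl (hσ h))
  rw [Finset.sum_congr rfl fun k _ => Finset.sum_congr rfl fun l _ => hterm k l]
  simp [Finset.sum_ite_eq]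

lemma rad_S4 [DecidableEq ι] (hmeas : ∀ p, Measurable (ε p)) (hval : ∀ p ω, ε p ω = 1 ∨ ε p ω = -1)
    (hQI : ∀ a b c d : ι, Integrable (fun ω => ε a ω * ε b ω * ε c ω * ε d ω) P)
    (hquad : ∀ a b c d : ι, ∫ ω, ε a ω * ε b ω * ε c ω * ε d ω ∂P ≤
      (if a = b ∧ c = d then (1:ℝ) else 0) + (if a = c ∧ b = d then 1 else 0) +
        (if a = d ∧ b = c then 1 else 0))
    {n : ℕ} (σ : Fin n → ι) (hσ : Function.Injective σ) :
    ∫ ω, (∑ k, ε (σ k) ω)^4 ∂P ≤ 3 * (n:ℝ)^2 := by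
  classical
  rw [show (fun ω => (∑ k, ε (σ k) ω)^4) =
      fun ω => ∑ a, ∑ b, ∑ c, ∑ d, ε (σ a) ω * ε (σ b) ω * ε (σ c) ω * ε (σ d) ω from
    funext fun ω => by
      rw [show (∑ k, ε (σ k) ω)^4 = (∑ k, ε (σ k) ω) * (∑ k, ε (σ k) ω) * (∑ k, ε (σ k) ω) *
        (∑ k, ε (σ k) ω) by ring]
      simp only [Finset.sum_mul, Finset.mul_sum]
      refine Finset.sum_congr rfl fun a _ => ?_
      refine Finset.sum_congr rfl fun b _ => ?_
      refine Finset.sum_congr rfl fun c _ => ?_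
      refine Finset.sum_congr rfl fun d _ => ?_
      ring]
  rw [integral_finset_sum _ (fun a _ => integrable_finset_sum _ (fun b _ =>
    integrable_finset_sum _ (fun c _ => integrable_finset_sum _ (fun d _ => hQI _ _ _ _))))]
  rw [Finset.sum_congr rfl fun a _ => integral_finset_sum _ (fun b _ =>
    integrable_finset_sum _ (fun c _ => integrable_finset_sum _ (fun d _ => hQI _ _ _ _)))]
  rw [Finset.sum_congr rfl fun a _ => Finset.sum_congr rfl fun b _ => integral_finset_sum _
    (fun c _ => integrable_finset_sum _ (fun d _ => hQI _ _ _ _))]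
  rw [Finset.sum_congr rfl fun a _ => Finset.sum_congr rfl fun b _ =>
    Finset.sum_congr rfl fun c _ => integral_finset_sum _ (fun d _ => hQI _ _ _ _)]
  have hbd : ∀ a b c d : Fin n, ∫ ω, ε (σ a) ω * ε (σ b) ω * ε (σ c) ω * ε (σ d) ω ∂P ≤
      (if a = b ∧ c = d then (1:ℝ) else 0) + (if a = c ∧ b = d then 1 else 0) +
        (if a = d ∧ b = c then 1 else 0) := by
    intro a b c d
    refine (hquad (σ a) (σ b) (σ c) (σ d)).trans (le_of_eq ?_)
    simp only [hσ.eq_iff]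
  calc ∑ a, ∑ b, ∑ c, ∑ d, ∫ ω, ε (σ a) ω * ε (σ b) ω * ε (σ c) ω * ε (σ d) ω ∂P
      ≤ ∑ a : Fin n, ∑ b : Fin n, ∑ c : Fin n, ∑ d : Fin n,
        ((if a = b ∧ c = d then (1:ℝ) else 0) + (if a = c ∧ b = d then 1 else 0) +
          (if a = d ∧ b = c then 1 else 0)) := by
        refine Finset.sum_le_sum fun a _ => Finset.sum_le_sum fun b _ =>
          Finset.sum_le_sum fun c _ => Finset.sum_le_sum fun d _ => hbd a b c d
    _ = 3 * (n:ℝ)^2 := by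
        simp only [Finset.sum_add_distrib]
        have h1 : ∑ a : Fin n, ∑ b : Fin n, ∑ c : Fin n, ∑ d : Fin n,
            (if a = b ∧ c = d then (1:ℝ) else 0) = (n:ℝ)^2 := by
          simp [ite_and, Finset.sum_ite_eq, sq]
        have h2 : ∑ a : Fin n, ∑ b : Fin n, ∑ c : Fin n, ∑ d : Fin n,
            (if a = c ∧ b = d then (1:ℝ) else 0) = (n:ℝ)^2 := by
          simp [ite_and, Finset.sum_ite_eq, sq]
        have h3 : ∑ a : Fin n, ∑ b : Fin n, ∑ c : Fin n, ∑ d : Fin n,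
            (if a = d ∧ b = c then (1:ℝ) else 0) = (n:ℝ)^2 := by
          simp [ite_and, Finset.sum_ite_eq, sq]
        rw [h1, h2, h3]; ring

lemma kh_memlp {g : Ω → ℝ} (hgm : Measurable g) {C : ℝ} (hbd : ∀ ω, ‖g ω‖ ≤ C)
    (p : ℝ≥0∞) : MemLp g p P :=
  (memLp_top_of_bound hgm.aestronglyMeasurable C (ae_of_all _ hbd)).mono_exponent le_top

lemma kh_upper {g : Ω → ℝ} (hgm : Measurable g) {C : ℝ} (hbd : ∀ ω, |g ω| ≤ C)
    (n : ℕ) (h2 : ∫ ω, (g ω)^2 ∂P = n) :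
    ∫ ω, |g ω| ∂P ≤ Real.sqrt n := by
  have hpq : (2:ℝ).HolderConjugate 2 := Real.holderConjugate_iff.mpr ⟨by norm_num, by norm_num⟩
  have habs : ∀ ω, ‖|g ω|‖ ≤ C := fun ω => by rw [Real.norm_eq_abs, abs_abs]; exact hbd ω
  have hH := integral_mul_le_Lp_mul_Lq_of_nonneg (μ := P) hpq
    (f := fun ω => |g ω|) (g := fun _ => (1:ℝ))
    (ae_of_all _ fun ω => abs_nonneg _) (ae_of_all _ fun ω => zero_le_one)
    (kh_memlp hgm.abs habs _) (kh_memlp measurable_const (C := 1) (fun _ => by simp) _)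
  simp only [mul_one] at hH
  have e1 : (fun ω => |g ω| ^ (2:ℝ)) = fun ω => (g ω)^2 := funext fun ω => by
    rw [show ((2:ℝ)) = ((2:ℕ):ℝ) by norm_num, Real.rpow_natCast, sq_abs]
  have e2 : ∫ _ω : Ω, (1:ℝ) ^ (2:ℝ) ∂P = 1 := by simp
  rw [e1, e2, h2] at hH
  calc ∫ ω, |g ω| ∂P ≤ (n:ℝ) ^ (1/2:ℝ) * (1:ℝ) ^ (1/2:ℝ) := hH
    _ = Real.sqrt n := by rw [Real.one_rpow, mul_one, Real.sqrt_eq_rpow]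

lemma kh_lower {g : Ω → ℝ} (hgm : Measurable g) {C : ℝ} (hbd : ∀ ω, |g ω| ≤ C)
    (n : ℕ) (h2 : ∫ ω, (g ω)^2 ∂P = n) (h4 : ∫ ω, (g ω)^4 ∂P ≤ 3 * (n:ℝ)^2) :
    Real.sqrt n / 2 ≤ ∫ ω, |g ω| ∂P := by
  rcases Nat.eq_zero_or_pos n with rfl | hn
  · simp only [Nat.cast_zero, Real.sqrt_zero, zero_div]
    exact integral_nonneg fun ω => abs_nonneg _
  have hpq : (3/2:ℝ).HolderConjugate 3 := Real.holderConjugate_iff.mpr ⟨by norm_num, by norm_num⟩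
  have hmF : Measurable fun ω => |g ω| ^ (2/3:ℝ) :=
    (Real.continuous_rpow_const (by norm_num)).measurable.comp hgm.abs
  have hmG : Measurable fun ω => |g ω| ^ (4/3:ℝ) :=
    (Real.continuous_rpow_const (by norm_num)).measurable.comp hgm.abs
  have hbF : ∀ ω, ‖|g ω| ^ (2/3:ℝ)‖ ≤ C ^ (2/3:ℝ) := fun ω => by
    rw [Real.norm_eq_abs, abs_of_nonneg (Real.rpow_nonneg (abs_nonneg _) _)]
    exact Real.rpow_le_rpow (abs_nonneg _) (hbd ω) (by norm_num)
  have hbG : ∀ ω, ‖|g ω| ^ (4/3:ℝ)‖ ≤ C ^ (4/3:ℝ) := fun ω => by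
    rw [Real.norm_eq_abs, abs_of_nonneg (Real.rpow_nonneg (abs_nonneg _) _)]
    exact Real.rpow_le_rpow (abs_nonneg _) (hbd ω) (by norm_num)
  have hH := integral_mul_le_Lp_mul_Lq_of_nonneg (μ := P) hpq
    (f := fun ω => |g ω| ^ (2/3:ℝ)) (g := fun ω => |g ω| ^ (4/3:ℝ))
    (ae_of_all _ fun ω => Real.rpow_nonneg (abs_nonneg _) _)
    (ae_of_all _ fun ω => Real.rpow_nonneg (abs_nonneg _) _)
    (kh_memlp hmF hbF _) (kh_memlp hmG hbG _)
  have e0 : (fun ω => |g ω| ^ (2/3:ℝ) * |g ω| ^ (4/3:ℝ)) = fun ω => (g ω)^2 :=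
    funext fun ω => by
      rw [← Real.rpow_add' (abs_nonneg _) (by norm_num)]
      rw [show (2/3 + 4/3:ℝ) = ((2:ℕ):ℝ) by norm_num, Real.rpow_natCast, sq_abs]
  have e1 : (fun ω => (|g ω| ^ (2/3:ℝ)) ^ (3/2:ℝ)) = fun ω => |g ω| := funext fun ω => by
    rw [← Real.rpow_mul (abs_nonneg _)]
    norm_num
  have e2 : (fun ω => (|g ω| ^ (4/3:ℝ)) ^ (3:ℝ)) = fun ω => (g ω)^4 := funext fun ω => by
    rw [← Real.rpow_mul (abs_nonneg _)]
    rw [show (4/3 * 3:ℝ) = ((4:ℕ):ℝ) by norm_num, Real.rpow_natCast, pow_abs]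
    rw [abs_of_nonneg (by positivity : (0:ℝ) ≤ (g ω)^4)]
  rw [e0, e1, e2, h2] at hH
  set I := ∫ ω, |g ω| ∂P with hI
  have hInn : 0 ≤ I := integral_nonneg fun ω => abs_nonneg _
  have hJnn : 0 ≤ ∫ ω, (g ω)^4 ∂P := integral_nonneg fun ω => by positivity
  have h13 : (∫ ω, (g ω)^4 ∂P) ^ (1/3:ℝ) ≤ (3 * (n:ℝ)^2) ^ (1/3:ℝ) :=
    Real.rpow_le_rpow hJnn h4 (by norm_num)
  have key : (n:ℝ) ≤ I ^ (2/3:ℝ) * (3 * (n:ℝ)^2) ^ (1/3:ℝ) := by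
    calc (n:ℝ) ≤ I ^ (1/(3/2):ℝ) * (∫ ω, (g ω)^4 ∂P) ^ (1/3:ℝ) := hH
      _ = I ^ (2/3:ℝ) * (∫ ω, (g ω)^4 ∂P) ^ (1/3:ℝ) := by norm_num
      _ ≤ I ^ (2/3:ℝ) * (3 * (n:ℝ)^2) ^ (1/3:ℝ) :=
          mul_le_mul_of_nonneg_left h13 (Real.rpow_nonneg hInn _)
  have h3n : (0:ℝ) ≤ 3 * (n:ℝ)^2 := by positivity
  have key2 : (n:ℝ) ^ (3/2:ℝ) ≤ I * (3 * (n:ℝ)^2) ^ (1/2:ℝ) := by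
    have h32 := Real.rpow_le_rpow (Nat.cast_nonneg n) key (by norm_num : (0:ℝ) ≤ 3/2)
    rw [Real.mul_rpow (Real.rpow_nonneg hInn _) (Real.rpow_nonneg h3n _)] at h32
    rw [← Real.rpow_mul hInn, ← Real.rpow_mul h3n] at h32
    rw [show (2/3 * (3/2):ℝ) = 1 by norm_num, show (1/3 * (3/2):ℝ) = 1/2 by norm_num,
      Real.rpow_one] at h32
    exact h32
  have hnpos : (0:ℝ) < n := by exact_mod_cast hn
  have hs3 : Real.sqrt 3 ≤ 2 := by
    nlinarith [Real.sq_sqrt (by norm_num : (0:ℝ) ≤ 3), Real.sqrt_nonneg 3]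
  have er : (3 * (n:ℝ)^2) ^ (1/2:ℝ) = Real.sqrt 3 * n := by
    rw [← Real.sqrt_eq_rpow, Real.sqrt_mul (by norm_num), Real.sqrt_sq (Nat.cast_nonneg n)]
  have el : (n:ℝ) ^ (3/2:ℝ) = n * Real.sqrt n := by
    rw [show (3/2:ℝ) = 1 + 1/2 by norm_num, Real.rpow_add hnpos, Real.rpow_one,
      ← Real.sqrt_eq_rpow]
  rw [er, el] at key2
  have hsn : 0 ≤ Real.sqrt n := Real.sqrt_nonneg _
  have hstep : I * (Real.sqrt 3 * n) ≤ I * (2 * n) :=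
    mul_le_mul_of_nonneg_left (by nlinarith) hInn
  have h2' : Real.sqrt n * n ≤ (2 * I) * n := by nlinarith
  have h3 : Real.sqrt n ≤ 2 * I := le_of_mul_le_mul_right (by linarith) hnpos
  linarith


end aux

/-- Rademacher complexity lower bound from shattering: if `F ⊆ [−1,1]^X` is shattered at scale
`α` by points `x₁,…,x_m` with witness `s`, and `ε_{j,k}` are i.i.d. Rademacher variables, then
`E[sup_{f∈F} ∑_j ∑_k ε_{j,k} f(x_j)] ≥ (α/4)·m·E[|∑_k ε_{j,k}|] ≥ (α/8)·m·√n`. -/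
theorem stmt_9 {X Ω : Type*} [MeasurableSpace Ω] (P : Measure Ω) [IsProbabilityMeasure P]
    (F : Set (X → ℝ)) (hFbd : ∀ f ∈ F, ∀ x, |f x| ≤ 1)
    (α : ℝ) (hα : 0 < α) (m n : ℕ) (x : Fin m → X) (s : Fin m → ℝ)
    (hshat : ∀ sgn : Fin m → Bool, ∃ f ∈ F, ∀ j,
      (if sgn j then (1 : ℝ) else -1) * (f (x j) - s j) ≥ α / 2)
    (ε : Fin m × Fin n → Ω → ℝ) (hmeas : ∀ p, Measurable (ε p))
    (hind : iIndepFun ε P)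
    (hval : ∀ p ω, ε p ω = 1 ∨ ε p ω = -1)
    (hfair : ∀ p, P {ω | ε p ω = 1} = 1 / 2) :
    (∀ j : Fin m, α / 4 * m * ∫ ω, |∑ k, ε (j, k) ω| ∂P ≤
        ∫ ω, ⨆ f : F, ∑ j', ∑ k, ε (j', k) ω * (f : X → ℝ) (x j') ∂P) ∧
    α / 8 * m * Real.sqrt n ≤
      ∫ ω, ⨆ f : F, ∑ j', ∑ k, ε (j', k) ω * (f : X → ℝ) (x j') ∂P := by
  classical
  obtain ⟨f₀, hf₀F, -⟩ := hshat (fun _ => true)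
  haveI hFne : Nonempty F := ⟨⟨f₀, hf₀F⟩⟩
  -- row sums
  set S : Fin m → Ω → ℝ := fun j ω => ∑ k, ε (j, k) ω with hS
  have hSmeas : ∀ j, Measurable (S j) :=
    fun j => Finset.measurable_sum _ fun k _ => hmeas (j, k)
  have hSbd : ∀ j ω, |S j ω| ≤ (n:ℝ) := by
    intro j ω
    calc |S j ω| ≤ ∑ k, |ε (j, k) ω| := Finset.abs_sum_le_sum_abs _ _
      _ = ∑ _k : Fin n, (1:ℝ) := Finset.sum_congr rfl fun k _ => rad_abs hval _ ω
      _ = (n:ℝ) := by simp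
  have hSint : ∀ j, Integrable (S j) P :=
    fun j => integrable_finset_sum _ fun k _ => rad_int hmeas hval (j, k)
  -- moment bounds
  have hQI2 : ∀ a b : Fin m × Fin n, Integrable (fun ω => ε a ω * ε b ω) P := fun a b =>
    ⟨((hmeas a).mul (hmeas b)).aestronglyMeasurable,
      HasFiniteIntegral.of_bounded (C := 1) (ae_of_all _ fun ω => by
        rw [Real.norm_eq_abs, abs_mul, rad_abs hval, rad_abs hval]; norm_num)⟩
  have hQI4 : ∀ a b c d : Fin m × Fin n,
      Integrable (fun ω => ε a ω * ε b ω * ε c ω * ε d ω) P := fun a b c d =>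
    ⟨((((hmeas a).mul (hmeas b)).mul (hmeas c)).mul (hmeas d)).aestronglyMeasurable,
      HasFiniteIntegral.of_bounded (C := 1) (ae_of_all _ fun ω => by
        rw [Real.norm_eq_abs, abs_mul, abs_mul, abs_mul,
          rad_abs hval, rad_abs hval, rad_abs hval, rad_abs hval]; norm_num)⟩
  have hpair : ∀ {p q : Fin m × Fin n}, p ≠ q → ∫ ω, ε p ω * ε q ω ∂P = 0 :=
    fun hpq => rad_pair hmeas hind hval hfair hpq
  have hinj : ∀ j : Fin m, Function.Injective (fun k : Fin n => ((j, k) : Fin m × Fin n)) :=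
    fun j a b h => by simpa using congrArg Prod.snd h
  have h2 : ∀ j, ∫ ω, (S j ω)^2 ∂P = n := fun j =>
    rad_S2 hmeas hval hpair hQI2 (fun k => (j, k)) (hinj j)
  have h4 : ∀ j, ∫ ω, (S j ω)^4 ∂P ≤ 3 * (n:ℝ)^2 := fun j =>
    rad_S4 hmeas hval hQI4
      (rad_quad hval hQI4 hpair (rad_prod0 hmeas hind hval hfair))
      (fun k => (j, k)) (hinj j)
  have Ilow : ∀ j, Real.sqrt n / 2 ≤ ∫ ω, |S j ω| ∂P := fun j =>
    kh_lower (hSmeas j) (hSbd j) n (h2 j) (h4 j)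
  have Iup : ∀ j, ∫ ω, |S j ω| ∂P ≤ Real.sqrt n := fun j =>
    kh_upper (hSmeas j) (hSbd j) n (h2 j)
  -- the supremum process
  set G : Ω → ℝ := fun ω => ⨆ f : F, ∑ j', ∑ k, ε (j', k) ω * (f : X → ℝ) (x j') with hG
  have htermbd : ∀ (f : X → ℝ), f ∈ F → ∀ ω,
      |∑ j', ∑ k, ε (j', k) ω * f (x j')| ≤ (m:ℝ) * n := by
    intro f hf ω
    calc |∑ j', ∑ k, ε (j', k) ω * f (x j')| ≤ ∑ j', |∑ k, ε (j', k) ω * f (x j')| :=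
        Finset.abs_sum_le_sum_abs _ _
      _ ≤ ∑ _j' : Fin m, (n:ℝ) := by
          refine Finset.sum_le_sum fun j' _ => ?_
          calc |∑ k, ε (j', k) ω * f (x j')| ≤ ∑ k, |ε (j', k) ω * f (x j')| :=
              Finset.abs_sum_le_sum_abs _ _
            _ ≤ ∑ _k : Fin n, (1:ℝ) := by
                refine Finset.sum_le_sum fun k _ => ?_
                rw [abs_mul, rad_abs hval, one_mul]
                exact hFbd f hf (x j')
            _ = (n:ℝ) := by simp
      _ = (m:ℝ) * n := by simp [mul_comm]
  have hbdd : ∀ ω, BddAbove (Set.range fun f : F =>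
      ∑ j', ∑ k, ε (j', k) ω * (f : X → ℝ) (x j')) := by
    intro ω
    refine ⟨(m:ℝ) * n, ?_⟩
    rintro y ⟨f, rfl⟩
    exact le_trans (le_abs_self _) (htermbd f f.2 ω)
  have hGbd : ∀ ω, |G ω| ≤ (m:ℝ) * n := by
    intro ω
    rw [abs_le]
    constructor
    · calc -((m:ℝ)*n) ≤ ∑ j', ∑ k, ε (j', k) ω * (f₀ : X → ℝ) (x j') :=
          neg_le_of_abs_le (htermbd f₀ hf₀F ω)
        _ ≤ G ω := le_ciSup (hbdd ω) ⟨f₀, hf₀F⟩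
    · exact ciSup_le fun f => le_trans (le_abs_self _) (htermbd f f.2 ω)
  -- measurability of G
  set β : Ω → (Fin m × Fin n → Bool) := fun ω p => decide (ε p ω = 1) with hβdef
  have hβ : Measurable β := by
    refine measurable_pi_lambda _ fun p => ?_
    refine measurable_to_countable' fun y => ?_
    cases y
    · have : (fun ω => decide (ε p ω = 1)) ⁻¹' {false} = (ε p ⁻¹' {1})ᶜ := by
        ext ω; simp
      rw [this]
      exact ((hmeas p) (measurableSet_singleton 1)).compl
    · have : (fun ω => decide (ε p ω = 1)) ⁻¹' {true} = ε p ⁻¹' {1} := by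
        ext ω; simp
      rw [this]
      exact (hmeas p) (measurableSet_singleton 1)
  set c : (Fin m × Fin n → Bool) → ℝ := fun b =>
    ⨆ f : F, ∑ j', ∑ k, (if b (j', k) then (1:ℝ) else -1) * (f : X → ℝ) (x j') with hc
  have hGeq : G = fun ω => c (β ω) := by
    funext ω
    refine iSup_congr fun f => ?_
    refine Finset.sum_congr rfl fun j' _ => Finset.sum_congr rfl fun k _ => ?_
    rcases hval (j', k) ω with h | h <;> rw [h] <;> simp [hβdef, h] <;> norm_num
  have hGmeas : Measurable G := by
    rw [hGeq]; exact (measurable_of_countable c).comp hβ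
  have hGint : Integrable G P :=
    ⟨hGmeas.aestronglyMeasurable, HasFiniteIntegral.of_bounded (C := (m:ℝ)*n)
      (ae_of_all _ fun ω => by rw [Real.norm_eq_abs]; exact hGbd ω)⟩
  -- pointwise lower bound
  have hpoint : ∀ ω, (∑ j', S j' ω * s j') + α/2 * ∑ j', |S j' ω| ≤ G ω := by
    intro ω
    obtain ⟨f, hfF, hf⟩ := hshat (fun j' => decide (0 ≤ S j' ω))
    have h1 : ∀ j', S j' ω * s j' + α/2 * |S j' ω| ≤ S j' ω * f (x j') := by
      intro j'
      have hj := hf j'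
      by_cases hpos : 0 ≤ S j' ω
      · rw [decide_eq_true hpos, if_pos rfl, one_mul] at hj
        rw [abs_of_nonneg hpos]
        nlinarith [mul_nonneg hpos (by linarith : (0:ℝ) ≤ f (x j') - s j' - α/2)]
      · push_neg at hpos
        rw [decide_eq_false (not_le.mpr hpos), if_neg (by simp), neg_one_mul] at hj
        rw [abs_of_neg hpos]
        nlinarith [mul_nonneg (by linarith : (0:ℝ) ≤ -(S j' ω))
          (by linarith : (0:ℝ) ≤ s j' - α/2 - f (x j'))]
    calc (∑ j', S j' ω * s j') + α/2 * ∑ j', |S j' ω|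
        = ∑ j', (S j' ω * s j' + α/2 * |S j' ω|) := by
          rw [Finset.sum_add_distrib, Finset.mul_sum]
      _ ≤ ∑ j', S j' ω * f (x j') := Finset.sum_le_sum fun j' _ => h1 j'
      _ = ∑ j', ∑ k, ε (j', k) ω * f (x j') := by
          refine Finset.sum_congr rfl fun j' _ => ?_
          rw [hS]; rw [Finset.sum_mul]
      _ ≤ G ω := le_ciSup (hbdd ω) ⟨f, hfF⟩
  -- integrate the pointwise bound
  have hSmean : ∀ j, ∫ ω, S j ω ∂P = 0 := by
    intro j
    rw [hS]
    rw [integral_finset_sum _ fun k _ => rad_int hmeas hval (j, k)]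
    exact Finset.sum_eq_zero fun k _ => rad_mean hmeas hval hfair (j, k)
  have hLint : Integrable (fun ω => (∑ j', S j' ω * s j') + α/2 * ∑ j', |S j' ω|) P := by
    refine Integrable.add ?_ ?_
    · exact integrable_finset_sum _ fun j' _ => (hSint j').mul_const _
    · exact ((integrable_finset_sum _ fun j' _ => (hSint j').abs).const_mul _)
  have hmono := integral_mono hLint hGint hpoint
  have hLval : ∫ ω, ((∑ j', S j' ω * s j') + α/2 * ∑ j', |S j' ω|) ∂P
      = α/2 * ∑ j', ∫ ω, |S j' ω| ∂P := by
    rw [integral_add (integrable_finset_sum _ fun j' _ => (hSint j').mul_const _)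
      (((integrable_finset_sum _ fun j' _ => (hSint j').abs).const_mul _))]
    rw [integral_finset_sum _ fun j' _ => (hSint j').mul_const _]
    rw [integral_const_mul]
    rw [integral_finset_sum _ fun j' _ => (hSint j').abs]
    have hz : ∀ j' : Fin m, ∫ ω, S j' ω * s j' ∂P = 0 := fun j' => by
      rw [integral_mul_const, hSmean j', zero_mul]
    rw [Finset.sum_congr rfl fun j' _ => hz j']
    simp
  rw [hLval] at hmono
  -- main bound
  have hsumlow : (m:ℝ) * (Real.sqrt n / 2) ≤ ∑ j', ∫ ω, |S j' ω| ∂P := by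
    calc (m:ℝ) * (Real.sqrt n / 2) = ∑ _j' : Fin m, Real.sqrt n / 2 := by
          rw [Finset.sum_const, Finset.card_univ, Fintype.card_fin, nsmul_eq_mul]
      _ ≤ ∑ j', ∫ ω, |S j' ω| ∂P := Finset.sum_le_sum fun j' _ => Ilow j'
  have hB : α/4 * m * Real.sqrt n ≤ ∫ ω, G ω ∂P := by
    have hstep : α/2 * ((m:ℝ) * (Real.sqrt n / 2)) ≤ α/2 * ∑ j', ∫ ω, |S j' ω| ∂P :=
      mul_le_mul_of_nonneg_left hsumlow (by linarith)
    calc α/4 * m * Real.sqrt n = α/2 * ((m:ℝ) * (Real.sqrt n / 2)) := by ring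
      _ ≤ α/2 * ∑ j', ∫ ω, |S j' ω| ∂P := hstep
      _ ≤ ∫ ω, G ω ∂P := hmono
  constructor
  · intro j
    have : α/4 * m * ∫ ω, |∑ k, ε (j, k) ω| ∂P ≤ α/4 * m * Real.sqrt n := by
      refine mul_le_mul_of_nonneg_left (Iup j) ?_
      positivity
    exact this.trans hB
  · refine le_trans ?_ hB
    have hsn : 0 ≤ Real.sqrt n := Real.sqrt_nonneg _
    nlinarith [mul_nonneg (mul_nonneg hα.le (Nat.cast_nonneg (α := ℝ) m)) hsn]
end

section
/- There exists a function class F of threshold functions on [0,1] with VC dimension 1, and an adversary that is σ-smooth with respect to some unknown base measure μ (depending on the data sequence), such that for any prediction strategy of the learner, if T ≤ 1/σ then the expected number of mistakes (expected regret with respect to F under 0-1 loss) is at least T/2. -/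
open MeasureTheory

noncomputable def stmtItv (b : ℕ → Bool) : ℕ → ℝ × ℝ
  | 0 => (0, 1)
  | n + 1 =>
    let p := stmtItv b n
    if b n then (p.1, (p.1 + p.2) / 2) else (((p.1 + p.2) / 2 + p.2) / 2, p.2)

noncomputable def stmtPt (b : ℕ → Bool) (n : ℕ) : ℝ :=
  ((stmtItv b n).1 + (stmtItv b n).2) / 2

lemma stmtItv_lt (b : ℕ → Bool) : ∀ n, (stmtItv b n).1 < (stmtItv b n).2 := by
  intro n
  induction n with
  | zero => simp [stmtItv]
  | succ n ih =>
    simp only [stmtItv]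
    cases hb : b n <;> simp [hb] <;> linarith

lemma stmtItv_congr (b c : ℕ → Bool) (n : ℕ) (h : ∀ k < n, b k = c k) :
    stmtItv b n = stmtItv c n := by
  induction n with
  | zero => rfl
  | succ n ih =>
    have h1 : stmtItv b n = stmtItv c n := ih fun k hk => h k (hk.trans (Nat.lt_succ_self n))
    simp only [stmtItv, h1, h n (Nat.lt_succ_self n)]

lemma stmtPt_congr (b c : ℕ → Bool) (n : ℕ) (h : ∀ k < n, b k = c k) :
    stmtPt b n = stmtPt c n := by
  unfold stmtPt; rw [stmtItv_congr b c n h]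

lemma stmtItv_nested (b : ℕ → Bool) (m n : ℕ) (h : m ≤ n) :
    (stmtItv b m).1 ≤ (stmtItv b n).1 ∧ (stmtItv b n).2 ≤ (stmtItv b m).2 := by
  induction n with
  | zero => simp_all
  | succ n ih =>
    rcases Nat.lt_or_ge m (n+1) with hm | hm
    · have := ih (Nat.lt_succ_iff.mp hm)
      have hlt := stmtItv_lt b n
      simp only [stmtItv]
      cases hb : b n <;> simp [hb] <;> constructor <;> linarith [this.1, this.2]
    · have : m = n + 1 := le_antisymm h hm
      subst this; exact ⟨le_refl _, le_refl _⟩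

lemma stmtItv_mem (b : ℕ → Bool) (n : ℕ) : (stmtItv b n).1 ∈ Set.Icc (0:ℝ) 1 := by
  have h := stmtItv_nested b 0 n (Nat.zero_le n)
  have hlt := stmtItv_lt b n
  simp only [stmtItv] at h
  constructor <;> [exact h.1; linarith [h.2]]

lemma stmtItv_key (b : ℕ → Bool) (N t : ℕ) (ht : t < N) :
    if b t then (stmtItv b N).1 ≤ stmtPt b t else stmtPt b t < (stmtItv b N).1 := by
  have hn := stmtItv_nested b (t+1) N ht
  have hlt := stmtItv_lt b t
  cases hb : b t with
  | true =>
    simp only [if_true]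
    have : (stmtItv b (t+1)).2 = stmtPt b t := by
      simp only [stmtItv, stmtPt, hb, if_true]
    have h2 := hn.2
    have h3 := stmtItv_lt b N
    rw [this] at h2
    linarith
  | false =>
    simp only [Bool.false_eq_true, if_false]
    have : (stmtItv b (t+1)).1 = ((stmtPt b t) + (stmtItv b t).2) / 2 := by
      simp [stmtItv, stmtPt, hb]
    have h1 := hn.1
    rw [this] at h1
    have : stmtPt b t < (stmtItv b t).2 := by unfold stmtPt; linarith
    linarith

open Classical in
/-- Lower bound with unknown base measure: the class of thresholds on `[0,1]` has VC dimension 1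
(some single point is shattered, no pair of points is shattered), yet for every `σ ∈ (0,1]` and
horizon `T ≤ 1/σ` there is a realizable adversary — whose context distributions are point masses
that are `σ`-smooth with respect to some (data-dependent, unknown) probability measure — forcing
every (deterministic) learner to suffer expected 0-1 regret (number of mistakes) at least `T/2`. -/
theorem stmt_13 :
    ∃ F : Set (ℝ → ℝ),
      F = {f | ∃ θ ∈ Set.Icc (0 : ℝ) 1, f = fun x => if θ ≤ x then (1 : ℝ) else -1} ∧
      (∃ x0 : ℝ, ∀ b : Bool, ∃ f ∈ F, f x0 = (if b then (1 : ℝ) else -1)) ∧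
      (¬ ∃ x1 x2 : ℝ, x1 ≠ x2 ∧ ∀ b1 b2 : Bool, ∃ f ∈ F,
        f x1 = (if b1 then (1 : ℝ) else -1) ∧ f x2 = (if b2 then (1 : ℝ) else -1)) ∧
      ∀ σ : ℝ, 0 < σ → σ ≤ 1 → ∀ T : ℕ, 0 < T → (T : ℝ) ≤ 1 / σ →
        ∃ (Ω : Type) (_ : MeasurableSpace Ω) (P : Measure Ω) (_ : IsProbabilityMeasure P)
          (xs ys : Fin T → Ω → ℝ),
          (∀ ω, ∃ f ∈ F, ∀ t, f (xs t ω) = ys t ω) ∧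
          (∀ ω, ∃ μb : Measure ℝ, IsProbabilityMeasure μb ∧
            ∀ t, ∀ A : Set ℝ, Measure.dirac (xs t ω) A ≤ ENNReal.ofReal (1 / σ) * μb A) ∧
          ∀ pred : (t : Fin T) → (Fin t → ℝ × ℝ) → ℝ → ℝ,
            (T : ℝ) / 2 ≤ ∫ ω,
              ((Finset.univ.filter fun t : Fin T =>
                pred t (fun su => (xs ⟨su, su.isLt.trans t.isLt⟩ ω,
                  ys ⟨su, su.isLt.trans t.isLt⟩ ω)) (xs t ω) ≠ ys t ω).card : ℝ) ∂P := by
  refine ⟨{f | ∃ θ ∈ Set.Icc (0 : ℝ) 1, f = fun x => if θ ≤ x then (1 : ℝ) else -1},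
    rfl, ?_, ?_, ?_⟩
  · -- shatter one point
    refine ⟨0, fun b => ?_⟩
    cases b
    · exact ⟨_, ⟨1, ⟨zero_le_one, le_refl 1⟩, rfl⟩, by norm_num⟩
    · exact ⟨_, ⟨0, ⟨le_refl 0, zero_le_one⟩, rfl⟩, by norm_num⟩
  · -- no two points shattered
    rintro ⟨x1, x2, hne, h⟩
    rcases hne.lt_or_gt with hlt | hlt
    · obtain ⟨f, ⟨θ, _, rfl⟩, h1, h2⟩ := h true false
      simp only at h1 h2
      by_cases hθ : θ ≤ x1
      · rw [if_pos (hθ.trans hlt.le)] at h2; norm_num at h2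
      · rw [if_neg hθ] at h1; norm_num at h1
    · obtain ⟨f, ⟨θ, _, rfl⟩, h1, h2⟩ := h false true
      simp only at h1 h2
      by_cases hθ : θ ≤ x2
      · rw [if_pos (hθ.trans hlt.le)] at h1; norm_num at h1
      · rw [if_neg hθ] at h2; norm_num at h2
  intro σ hσ hσ1 T hT hTσ
  set Ω := Fin T → Bool with hΩ
  letI : MeasurableSpace Ω := ⊤
  haveI : MeasurableSingletonClass Ω := ⟨fun _ => MeasurableSpace.measurableSet_top⟩
  set P : Measure Ω := ((Fintype.card Ω : ENNReal))⁻¹ • Measure.count with hP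
  have hcard : (Fintype.card Ω : ENNReal) ≠ 0 := by
    simp [Ω, Fintype.card_fun]
  have hcardtop : (Fintype.card Ω : ENNReal) ≠ ⊤ := ENNReal.natCast_ne_top _
  haveI hPprob : IsProbabilityMeasure P := by
    constructor
    rw [hP, Measure.smul_apply, Measure.count_univ, smul_eq_mul, ENat.card_eq_coe_fintype_card, ENat.toENNReal_coe,
      ENNReal.inv_mul_cancel hcard hcardtop]
  -- extension of ω to ℕ → Bool
  set ext : Ω → ℕ → Bool := fun ω n => if h : n < T then ω ⟨n, h⟩ else false with hext
  set xs : Fin T → Ω → ℝ := fun t ω => stmtPt (ext ω) t.val with hxs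
  set ys : Fin T → Ω → ℝ := fun t ω => if ω t then 1 else -1 with hys
  refine ⟨Ω, inferInstance, P, hPprob, xs, ys, ?_, ?_, ?_⟩
  · -- realizability
    intro ω
    set θ := (stmtItv (ext ω) T).1 with hθ
    refine ⟨fun x => if θ ≤ x then (1:ℝ) else -1, ⟨θ, stmtItv_mem _ _, rfl⟩, fun t => ?_⟩
    have hkey := stmtItv_key (ext ω) T t.val t.isLt
    have hbt : ext ω t.val = ω t := by simp [ext, t.isLt]
    rw [hbt] at hkey
    simp only [xs, ys]
    cases hωt : ω t
    · rw [hωt] at hkey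
      norm_num at hkey ⊢
      first
      | exact not_le.mpr hkey
      | simp [not_le.mpr hkey]
      | linarith
    · rw [hωt] at hkey
      norm_num at hkey ⊢
      first
      | exact hkey
      | simp [hkey]
      | linarith
  · -- smoothness
    intro ω
    have hT0 : (T : ENNReal) ≠ 0 := by
      simpa using hT.ne'
    have hTtop : (T : ENNReal) ≠ ⊤ := ENNReal.natCast_ne_top _
    refine ⟨((T : ENNReal))⁻¹ • ∑ t : Fin T, Measure.dirac (xs t ω), ?_, ?_⟩
    · constructor
      rw [Measure.smul_apply, Measure.finset_sum_apply, smul_eq_mul]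
      simp only [measure_univ]
      rw [Finset.sum_const, Finset.card_univ, Fintype.card_fin, nsmul_eq_mul, mul_one,
        ENNReal.inv_mul_cancel hT0 hTtop]
    · intro t A
      have h1 : Measure.dirac (xs t ω) A ≤ ∑ s : Fin T, Measure.dirac (xs s ω) A :=
        Finset.single_le_sum (f := fun s => Measure.dirac (xs s ω) A)
          (fun s _ => zero_le) (Finset.mem_univ t)
      have h2 : (T : ENNReal) ≤ ENNReal.ofReal (1 / σ) := by
        rw [← ENNReal.ofReal_natCast T]
        exact ENNReal.ofReal_le_ofReal hTσ
      calc Measure.dirac (xs t ω) A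
          = (T : ENNReal) * ((T : ENNReal))⁻¹ * Measure.dirac (xs t ω) A := by
            rw [ENNReal.mul_inv_cancel hT0 hTtop, one_mul]
        _ = (T : ENNReal) * (((T : ENNReal))⁻¹ * Measure.dirac (xs t ω) A) := by ring
        _ ≤ ENNReal.ofReal (1 / σ) * (((T : ENNReal))⁻¹ • ∑ s : Fin T, Measure.dirac (xs s ω)) A := by
            rw [Measure.smul_apply, Measure.finset_sum_apply, smul_eq_mul]
            exact mul_le_mul' h2 (mul_le_mul' le_rfl h1)
  · -- lower bound
    intro pred
    classical
    set M : Fin T → Ω → Prop := fun t ω =>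
      pred t (fun su => (xs ⟨su, su.isLt.trans t.isLt⟩ ω,
        ys ⟨su, su.isLt.trans t.isLt⟩ ω)) (xs t ω) ≠ ys t ω with hM
    set ind : Fin T → Ω → ℝ := fun t ω => if M t ω then 1 else 0 with hind
    -- facts about flipping bit t
    have hone : ∀ t : Fin T, ∀ ω : Ω, 1 ≤ ind t ω + ind t (Function.update ω t (!ω t)) := by
      intro t ω
      set upd : Ω := Function.update ω t (!ω t) with hupd
      have hxe : ∀ s : Fin T, s.val ≤ t.val → xs s upd = xs s ω := by
        intro s hs
        simp only [hxs]
        refine stmtPt_congr _ _ _ (fun k hk => ?_)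
        have hkt : k ≠ t.val := by omega
        simp only [hext]
        by_cases h2 : k < T
        · have hne : (⟨k, h2⟩ : Fin T) ≠ t := fun hc => hkt (congrArg Fin.val hc)
          rw [dif_pos h2, dif_pos h2, hupd, Function.update_of_ne hne]
        · rw [dif_neg h2, dif_neg h2]
      have hye : ∀ s : Fin T, s ≠ t → ys s upd = ys s ω := by
        intro s hsne
        simp only [hys, hupd, Function.update_of_ne hsne]
      have hyt : ys t upd ≠ ys t ω := by
        simp only [hys, hupd, Function.update_self]
        cases hb : ω t <;> norm_num
      have hhist : (fun su : Fin t => (xs ⟨su, su.isLt.trans t.isLt⟩ upd,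
            ys ⟨su, su.isLt.trans t.isLt⟩ upd))
          = (fun su : Fin t => (xs ⟨su, su.isLt.trans t.isLt⟩ ω,
            ys ⟨su, su.isLt.trans t.isLt⟩ ω)) := by
        funext su
        have h1 : (⟨su.val, su.isLt.trans t.isLt⟩ : Fin T) ≠ t :=
          fun hc => absurd (congrArg Fin.val hc) (Nat.ne_of_lt su.isLt)
        rw [hxe _ su.isLt.le, hye _ h1]
      by_cases h : M t ω
      · have h0 : (0:ℝ) ≤ ind t upd := by
          simp only [hind]; positivity
        simp only [hind, if_pos h]
        linarith
      · have heq : pred t (fun su => (xs ⟨su, su.isLt.trans t.isLt⟩ ω,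
            ys ⟨su, su.isLt.trans t.isLt⟩ ω)) (xs t ω) = ys t ω := not_ne_iff.mp h
        have hMu : M t upd := by
          simp only [hM]
          rw [hhist, hxe t le_rfl, heq]
          exact fun hc => hyt hc.symm
        simp only [hind, if_pos hMu]
        have h0 : (0:ℝ) ≤ ind t ω := by
          simp only [hind]; positivity
        simp only [hind] at h0 ⊢
        linarith
    -- per-round sum bound
    have hper : ∀ t : Fin T, (Fintype.card Ω : ℝ) ≤ 2 * ∑ ω : Ω, ind t ω := by
      intro t
      have hinv : Function.Involutive (fun ω : Ω => Function.update ω t (!ω t)) := by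
        intro ω
        funext s
        by_cases hs : s = t
        · subst hs; simp
        · simp [Function.update_of_ne hs]
      have hbij := hinv.bijective
      have hsum : ∑ ω : Ω, ind t (Function.update ω t (!ω t)) = ∑ ω : Ω, ind t ω :=
        Fintype.sum_bijective _ hbij _ _ (fun ω => rfl)
      calc (Fintype.card Ω : ℝ) = ∑ _ω : Ω, (1:ℝ) := by
            rw [Finset.sum_const, Finset.card_univ, nsmul_eq_mul, mul_one]
        _ ≤ ∑ ω : Ω, (ind t ω + ind t (Function.update ω t (!ω t))) :=
            Finset.sum_le_sum (fun ω _ => hone t ω)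
        _ = 2 * ∑ ω : Ω, ind t ω := by
            rw [Finset.sum_add_distrib, hsum]; ring
    -- compute the integral
    have hint : Integrable (fun ω : Ω =>
        ((Finset.univ.filter fun t : Fin T => M t ω).card : ℝ)) P := .of_finite
    rw [MeasureTheory.integral_fintype hint]
    have hPs : ∀ ω : Ω, (P {ω}).toReal = (Fintype.card Ω : ℝ)⁻¹ := by
      intro ω
      rw [hP, Measure.smul_apply, Measure.count_singleton, smul_eq_mul, mul_one,
        ENNReal.toReal_inv]
      simp
    have hcnt : ∀ ω : Ω, ((Finset.univ.filter fun t : Fin T => M t ω).card : ℝ)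
        = ∑ t : Fin T, ind t ω := by
      intro ω
      rw [Finset.card_filter]
      push_cast
      rfl
    have hcardpos : (0:ℝ) < (Fintype.card Ω : ℝ) := by
      exact_mod_cast Fintype.card_pos
    calc (T : ℝ) / 2 = (Fintype.card Ω : ℝ)⁻¹ * (T * (Fintype.card Ω : ℝ) / 2) := by
          field_simp
      _ ≤ (Fintype.card Ω : ℝ)⁻¹ * ∑ ω : Ω, ∑ t : Fin T, ind t ω := by
          apply mul_le_mul_of_nonneg_left _ (by positivity)
          rw [Finset.sum_comm]
          calc (T : ℝ) * (Fintype.card Ω : ℝ) / 2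
              = ∑ _t : Fin T, (Fintype.card Ω : ℝ) / 2 := by
                rw [Finset.sum_const, Finset.card_univ, Fintype.card_fin, nsmul_eq_mul]; ring
            _ ≤ ∑ t : Fin T, ∑ ω : Ω, ind t ω := by
                refine Finset.sum_le_sum (fun t _ => ?_)
                linarith [hper t]
      _ = ∑ ω : Ω, (P {ω}).toReal • ((Finset.univ.filter fun t : Fin T => M t ω).card : ℝ) := by
          rw [Finset.mul_sum]
          refine Finset.sum_congr rfl (fun ω _ => ?_)
          rw [hPs ω, hcnt ω, smul_eq_mul]
end
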